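/- Let Q be a group acting on a finite nonempty set X, and suppose that the stabilizers of any two points of X are conjugate subgroups of Q. Fix x₀ ∈ X and let Q₀ be the stabilizer of x₀. Then the index [Q : Q₀] is finite and divides |X|, and X is isomorphic as a Q-set to the disjoint union of r copies of the left coset space Q/Q₀, where r = |X| / [Q : Q₀]. -/

import Mathlib

/-- Let `Q` act on a finite nonempty set `X` such that the
stabilizers of any two points are conjugate in `Q`.  Fix `x₀ ∈ X` and let
`Q₀` be its stabilizer.  Then the index `[Q : Q₀]` is finite and divides
`|X|`, and `X` is `Q`-equivariantly isomorphic to the disjoint union of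
`r = |X| / [Q : Q₀]` copies of the coset space `Q/Q₀`. -/
theorem qset_decomposition_into_cosets {Q X : Type*} [Group Q] [MulAction Q X]
    [Fintype X] [Nonempty X]
    (hconj : ∀ x y : X, ∃ g : Q, ∀ q : Q, q • y = y ↔ (g⁻¹ * q * g) • x = x)
    (x₀ : X) :
    (MulAction.stabilizer Q x₀).index ≠ 0 ∧
    (MulAction.stabilizer Q x₀).index ∣ Fintype.card X ∧
    ∃ e : X ≃ Fin (Fintype.card X / (MulAction.stabilizer Q x₀).index) ×
        (Q ⧸ MulAction.stabilizer Q x₀),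
      ∀ (q : Q) (x : X), e (q • x) = ((e x).1, q • (e x).2) := by
  classical
  set Q₀ := MulAction.stabilizer Q x₀ with hQ₀def
  let Ω := MulAction.orbitRel.Quotient Q X
  let y : Ω → X := fun ω => ω.out
  choose g hg using fun ω : Ω => hconj x₀ (y ω)
  have hmem : ∀ (ω : Ω) (q : Q), q • y ω = y ω ↔ (g ω)⁻¹ * q * g ω ∈ Q₀ := by
    intro ω q
    rw [hg ω q]
    rfl
  have hsec : ∀ x : X, ∃ c : Q, c • y (Quotient.mk'' x : Ω) = x := by
    intro x
    have h1 : (Quotient.mk'' x : Ω).out ∈ MulAction.orbit Q x := by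
      rw [← MulAction.orbitRel_apply]
      exact Quotient.mk_out x
    obtain ⟨c, hc⟩ := h1
    refine ⟨c⁻¹, ?_⟩
    show c⁻¹ • (Quotient.mk'' x : Ω).out = x
    have hc' : c • x = (Quotient.mk'' x : Ω).out := hc
    rw [← hc', inv_smul_smul]
  choose c hc using hsec
  have hmk : ∀ (q : Q) (x : X), (Quotient.mk'' (q • x) : Ω) = Quotient.mk'' x := by
    intro q x
    apply Quotient.sound'
    rw [MulAction.orbitRel_apply]
    exact ⟨q, rfl⟩
  -- the explicit equivariant bijection X ≃ Ω × Q⧸Q₀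
  let e0 : X ≃ Ω × (Q ⧸ Q₀) :=
  { toFun := fun x =>
      (Quotient.mk'' x, QuotientGroup.mk (c x * g (Quotient.mk'' x)))
    invFun := fun p =>
      Quotient.liftOn' p.2 (fun q => (q * (g p.1)⁻¹) • y p.1) (by
        intro a b hab
        have hab' : a⁻¹ * b ∈ Q₀ := QuotientGroup.leftRel_apply.mp hab
        have hYY : ((a * (g p.1)⁻¹)⁻¹ * (b * (g p.1)⁻¹)) • y p.1 = y p.1 := by
          rw [hmem p.1]
          have heq : (g p.1)⁻¹ * ((a * (g p.1)⁻¹)⁻¹ * (b * (g p.1)⁻¹)) * g p.1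
              = a⁻¹ * b := by group
          rw [heq]
          exact hab'
        calc (a * (g p.1)⁻¹) • y p.1
            = (a * (g p.1)⁻¹) • (((a * (g p.1)⁻¹)⁻¹ * (b * (g p.1)⁻¹)) • y p.1) := by
              rw [hYY]
          _ = (b * (g p.1)⁻¹) • y p.1 := by
              rw [← mul_smul, mul_inv_cancel_left])
    left_inv := by
      intro x
      show (c x * g (Quotient.mk'' x) * (g (Quotient.mk'' x))⁻¹) • y (Quotient.mk'' x) = x
      rw [mul_inv_cancel_right]
      exact hc x
    right_inv := by
      rintro ⟨ω, qbar⟩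
      induction qbar using Quotient.inductionOn' with
      | h q =>
        show ((fun x => ((Quotient.mk'' x : Ω),
            (QuotientGroup.mk (c x * g (Quotient.mk'' x)) : Q ⧸ Q₀)))
            ((q * (g ω)⁻¹) • y ω)) = (ω, Quotient.mk'' q)
        set x := (q * (g ω)⁻¹) • y ω with hx
        have h1 : (Quotient.mk'' x : Ω) = ω := by
          have h2 : (Quotient.mk'' x : Ω) = Quotient.mk'' (y ω) := by
            apply Quotient.sound'
            rw [MulAction.orbitRel_apply]
            exact ⟨q * (g ω)⁻¹, hx.symm⟩
          rw [h2]
          exact Quotient.out_eq' ω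
        have hcx : c x • y ω = x := by
          have := hc x
          rwa [h1] at this
        simp only
        rw [h1]
        refine Prod.ext rfl ?_
        show QuotientGroup.mk (c x * g ω) = QuotientGroup.mk q
        rw [QuotientGroup.eq]
        have key : ((c x)⁻¹ * (q * (g ω)⁻¹)) • y ω = y ω := by
          rw [mul_smul, ← hx, inv_smul_eq_iff]
          exact hcx.symm
        rw [hmem ω] at key
        have heq : (c x * g ω)⁻¹ * q
            = (g ω)⁻¹ * ((c x)⁻¹ * (q * (g ω)⁻¹)) * g ω := by group
        rw [heq]
        exact key
    }
  -- equivariance of e0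
  have he0 : ∀ (q : Q) (x : X), e0 (q • x) = ((e0 x).1, q • (e0 x).2) := by
    intro q x
    show (Quotient.mk'' (q • x), (QuotientGroup.mk (c (q • x) * g (Quotient.mk'' (q • x))) : Q ⧸ Q₀))
        = (Quotient.mk'' x, q • QuotientGroup.mk (c x * g (Quotient.mk'' x)))
    have h1 : (Quotient.mk'' (q • x) : Ω) = Quotient.mk'' x := hmk q x
    rw [h1]
    refine Prod.ext rfl ?_
    show QuotientGroup.mk (c (q • x) * g (Quotient.mk'' x))
        = QuotientGroup.mk (q * (c x * g (Quotient.mk'' x)))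
    rw [QuotientGroup.eq]
    have hcq : c (q • x) • y (Quotient.mk'' x : Ω) = q • x := by
      have := hc (q • x)
      rwa [h1] at this
    have key : ((c (q • x))⁻¹ * (q * c x)) • y (Quotient.mk'' x : Ω)
        = y (Quotient.mk'' x : Ω) := by
      rw [mul_smul, mul_smul, hc x, inv_smul_eq_iff]
      exact hcq.symm
    rw [hmem (Quotient.mk'' x)] at key
    have heq : (c (q • x) * g (Quotient.mk'' x))⁻¹ * (q * (c x * g (Quotient.mk'' x)))
        = (g (Quotient.mk'' x))⁻¹ * ((c (q • x))⁻¹ * (q * c x)) * g (Quotient.mk'' x) := by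
      group
    rw [heq]
    exact key
  -- finiteness and cardinalities
  haveI : Finite (Ω × (Q ⧸ Q₀)) := Finite.of_equiv X e0
  haveI : Nonempty Ω := Nonempty.map (fun x => (Quotient.mk'' x : Ω)) ‹Nonempty X›
  haveI : Finite Ω := Finite.prod_left (Q ⧸ Q₀)
  haveI : Finite (Q ⧸ Q₀) := Finite.prod_right Ω
  have hidx : Q₀.index = Nat.card (Q ⧸ Q₀) := rfl
  have hcard : Fintype.card X = Nat.card Ω * Q₀.index := by
    rw [hidx, ← Nat.card_prod, ← Nat.card_congr e0, Nat.card_eq_fintype_card]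
  have hidx0 : Q₀.index ≠ 0 := by
    rw [hidx]
    exact Nat.card_pos.ne'
  have hr : Fintype.card X / Q₀.index = Nat.card Ω := by
    rw [hcard, Nat.mul_div_cancel _ (Nat.pos_of_ne_zero hidx0)]
  refine ⟨hidx0, ⟨Nat.card Ω, by rw [hcard, mul_comm]⟩, ?_⟩
  let eΩ : Ω ≃ Fin (Fintype.card X / Q₀.index) := Finite.equivFinOfCardEq hr.symm
  refine ⟨e0.trans (Equiv.prodCongr eΩ (Equiv.refl _)), ?_⟩
  intro q x
  show (eΩ (e0 (q • x)).1, (e0 (q • x)).2)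
      = ((eΩ (e0 x).1, (e0 x).2).1, q • (eΩ (e0 x).1, (e0 x).2).2)
  rw [he0 q x]
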